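/- Let M > 0, let x, y, v' ∈ ℝ^d with ‖x‖ ≤ M and ‖v'‖ ≤ M, and let ε satisfy 0 < ε ≤ 3M². Set λ = ε/(3M²) and x' = (1−λ)x + λv'. If (x − y)·(x − v') > ε, then λ ∈ (0,1] and ‖x' − y‖² ≤ ‖x − y‖² − 2ε²/(9M²). -/

import Mathlib

open scoped RealInnerProductSpace

/-- Per-step potential decrease of the Frank–Wolfe-style approximate projection
procedure: if the gap `(x − y)·(x − v')` exceeds `ε`, then the convex combination
`x' = (1−λ)x + λv'` with `λ = ε/(3M²)` decreases the squared distance to `y`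
by at least `2ε²/(9M²)`. -/
theorem fw_step_potential_decrease {d : ℕ}
    (M : ℝ) (hM : 0 < M) (x y v' : EuclideanSpace ℝ (Fin d))
    (hx : ‖x‖ ≤ M) (hv : ‖v'‖ ≤ M) (ε : ℝ) (hε : 0 < ε) (hεM : ε ≤ 3 * M ^ 2)
    (hgap : ε < ⟪x - y, x - v'⟫) :
    ε / (3 * M ^ 2) ∈ Set.Ioc (0 : ℝ) 1 ∧
    ‖((1 - ε / (3 * M ^ 2)) • x + (ε / (3 * M ^ 2)) • v') - y‖ ^ 2 ≤
      ‖x - y‖ ^ 2 - 2 * ε ^ 2 / (9 * M ^ 2) := by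
  set lam := ε / (3 * M ^ 2) with hlam
  have hM2 : (0:ℝ) < 3 * M ^ 2 := by positivity
  have hlampos : 0 < lam := div_pos hε hM2
  have hlam1 : lam ≤ 1 := (div_le_one hM2).mpr hεM
  have key : lam * (3 * M ^ 2) = ε := div_mul_cancel₀ ε (ne_of_gt hM2)
  refine ⟨⟨hlampos, hlam1⟩, ?_⟩
  have hxy : (1 - lam) • x + lam • v' - y = (x - y) - lam • (x - v') := by
    module
  rw [hxy, norm_sub_sq_real, real_inner_smul_right, norm_smul,
    Real.norm_eq_abs, abs_of_pos hlampos]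
  have hnorm : ‖x - v'‖ ≤ 2 * M := by
    calc ‖x - v'‖ ≤ ‖x‖ + ‖v'‖ := norm_sub_le _ _
    _ ≤ 2 * M := by linarith
  have hnn : (0:ℝ) ≤ ‖x - v'‖ := norm_nonneg _
  have h1 : lam * ε ≤ lam * ⟪x - y, x - v'⟫ :=
    le_of_lt (mul_lt_mul_of_pos_left hgap hlampos)
  have h2 : (lam * ‖x - v'‖) ^ 2 ≤ (lam * (2 * M)) ^ 2 := by
    have := mul_le_mul_of_nonneg_left hnorm (le_of_lt hlampos)
    exact pow_le_pow_left₀ (by positivity) this 2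
  have hε2 : 2 * ε ^ 2 / (9 * M ^ 2) = 2 * M ^ 2 * lam ^ 2 := by
    field_simp [hlam]
    rw [← key]; ring
  nlinarith [sq_nonneg lam, sq_nonneg M]
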